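/- Let λ ≥ 2 be a real number and d ≥ 1. Consider the set S of affinely independent families p : Fin (d+1) → EuclideanSpace ℝ (Fin d) whose pairwise distances all lie in {1, λ}, modulo the equivalence relation identifying p and q when some isometry f of EuclideanSpace ℝ (Fin d) and some permutation σ of Fin (d+1) satisfy f (p i) = q (σ i) for all i. Then the quotient of S by this relation is in bijection with the set of partitions of d+1 (Nat.Partition (d+1)). -/

import Mathlib

/-- A configuration: an affinely independent family of `d+1` points in
`d`-dimensional Euclidean space whose pairwise distances all lie in `{1, lam}`. -/
def Config (d : ℕ) (lam : ℝ) : Type :=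
  { p : Fin (d + 1) → EuclideanSpace ℝ (Fin d) //
    AffineIndependent ℝ p ∧ ∀ i j, i ≠ j → dist (p i) (p j) ∈ ({1, lam} : Set ℝ) }

/-- Two configurations are isomorphic (congruent) if some isometry of the ambient
space maps one onto the other up to relabeling of the vertices. -/
def ConfigIso (d : ℕ) (lam : ℝ) (p q : Config d lam) : Prop :=
  ∃ (f : EuclideanSpace ℝ (Fin d) ≃ᵢ EuclideanSpace ℝ (Fin d))
    (σ : Equiv.Perm (Fin (d + 1))), ∀ i, f (p.1 i) = q.1 (σ i)

open Finset Function

noncomputable section SimplexAux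
open scoped Classical RealInnerProductSpace

variable {α β γ : Type*} [Fintype α] [Fintype β] [Fintype γ]

/-- multiset of fiber cardinalities of a function on a fintype -/
def fiberCards (f : α → β) : Multiset ℕ :=
  Finset.univ.val.map (fun b => (Finset.univ.filter (fun a => f a = b)).card)

lemma fiberCards_eq_of_equiv (f : α → β) (g : α → γ) (e : α ≃ α)
    (hf : Surjective f) (hg : Surjective g)
    (h : ∀ i j, f i = f j ↔ g (e i) = g (e j)) : fiberCards f = fiberCards g := by
  classical
  set sf : β → α := surjInv hf with hsf
  have hfsf : ∀ b, f (sf b) = b := surjInv_eq hf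
  have hTinj : Injective (fun b => g (e (sf b))) := by
    intro b b' hb
    have := (h (sf b) (sf b')).mpr hb
    rw [hfsf, hfsf] at this; exact this
  have hTsurj : Surjective (fun b => g (e (sf b))) := by
    intro c
    obtain ⟨a, ha⟩ := hg c
    obtain ⟨i, rfl⟩ := e.surjective a
    refine ⟨f i, ?_⟩
    have h1 : f (sf (f i)) = f i := hfsf (f i)
    have h2 := (h (sf (f i)) i).mp h1
    simp only [h2, ha]
  let E : β ≃ γ := Equiv.ofBijective _ ⟨hTinj, hTsurj⟩
  have hEcard : ∀ b, (Finset.univ.filter (fun a => g a = E b)).card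
      = (Finset.univ.filter (fun a => f a = b)).card := by
    intro b
    apply Finset.card_bij (fun a _ => e.symm a)
    · intro a ha
      simp only [mem_filter, mem_univ, true_and] at ha ⊢
      have hEb : E b = g (e (sf b)) := rfl
      rw [hEb] at ha
      have h3 : g (e (e.symm a)) = g (e (sf b)) := by rwa [e.apply_symm_apply]
      have h4 := (h (e.symm a) (sf b)).mpr h3
      rw [hfsf] at h4; exact h4
    · intro a _ a' _ hh; exact e.symm.injective hh
    · intro a ha
      refine ⟨e a, ?_, by simp⟩
      simp only [mem_filter, mem_univ, true_and] at ha ⊢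
      have h5 : f a = f (sf b) := by rw [hfsf, ha]
      have h6 := (h a (sf b)).mp h5
      rw [h6]; rfl
  have huniv : (Finset.univ : Finset γ).val = (Finset.univ : Finset β).val.map E := by
    rw [← Finset.map_univ_equiv E]; rfl
  unfold fiberCards
  rw [huniv, Multiset.map_map]
  exact (Multiset.map_congr rfl (fun b _ => hEcard b)).symm

lemma count_fiberCards (f : α → β) (v : ℕ) :
    Multiset.count v (fiberCards f)
      = Fintype.card {b // (Finset.univ.filter (fun a => f a = b)).card = v} := by
  classical
  unfold fiberCards
  rw [Multiset.count_map, Fintype.card_subtype]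
  show Multiset.card _ = Multiset.card _
  apply congrArg
  apply Multiset.filter_congr
  intro x _
  exact eq_comm

lemma exists_equiv_of_fiberCards_eq (f : α → β) (g : α → γ)
    (h : fiberCards f = fiberCards g) :
    ∃ e : α ≃ α, ∀ i j, f i = f j ↔ g (e i) = g (e j) := by
  classical
  set cF : β → ℕ := fun b => (Finset.univ.filter (fun a => f a = b)).card with hcF
  set cG : γ → ℕ := fun c => (Finset.univ.filter (fun a => g a = c)).card with hcG
  have hcount : ∀ v : ℕ, Fintype.card {b // cF b = v} = Fintype.card {c // cG c = v} := by
    intro v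
    rw [← count_fiberCards f v, ← count_fiberCards g v, h]
  -- matching of fibers of cF and cG
  have Ev : ∀ v : ℕ, {b // cF b = v} ≃ {c // cG c = v} :=
    fun v => Fintype.equivOfCardEq (hcount v)
  set T : β → γ := fun b => (Ev (cF b) ⟨b, rfl⟩).1 with hT
  have hbridge : ∀ (v : ℕ) (b : β) (hb : cF b = v), ((Ev v) ⟨b, hb⟩).1 = T b := by
    intro v b hb; subst hb; rfl
  have hTval : ∀ b, cG (T b) = cF b := fun b => ((Ev (cF b)) ⟨b, rfl⟩).2
  have hTinj : Injective T := by
    intro b b' hbb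
    have hv : cF b = cF b' := by rw [← hTval b, ← hTval b', hbb]
    have h1 : ((Ev (cF b')) ⟨b, hv⟩).1 = T b := hbridge _ _ hv
    have h2 : ((Ev (cF b')) ⟨b', rfl⟩).1 = T b' := hbridge _ _ rfl
    have : (Ev (cF b')) ⟨b, hv⟩ = (Ev (cF b')) ⟨b', rfl⟩ :=
      Subtype.ext (by rw [h1, h2, hbb])
    have := (Ev (cF b')).injective this
    exact congrArg Subtype.val this
  have hTsurj : Surjective T := by
    intro c
    set bb := (Ev (cG c)).symm ⟨c, rfl⟩ with hbb
    refine ⟨bb.1, ?_⟩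
    have h1 : ((Ev (cG c)) ⟨bb.1, bb.2⟩).1 = T bb.1 := hbridge _ _ bb.2
    rw [← h1]
    have : (⟨bb.1, bb.2⟩ : {b // cF b = cG c}) = bb := rfl
    rw [this, hbb, (Ev (cG c)).apply_symm_apply]
  have Fb : ∀ b : β, {a // f a = b} ≃ {a // g a = T b} := by
    intro b
    apply Fintype.equivOfCardEq
    rw [Fintype.card_subtype, Fintype.card_subtype]
    exact ((hTval b).symm : cF b = cG (T b))
  let e : α ≃ α := (Equiv.sigmaFiberEquiv f).symm.trans
    ((Equiv.sigmaCongr (Equiv.ofBijective T ⟨hTinj, hTsurj⟩) Fb).trans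
      (Equiv.sigmaFiberEquiv g))
  have he : ∀ i, g (e i) = T (f i) := by
    intro i
    have : e i = (Fb (f i) ⟨i, rfl⟩).1 := rfl
    rw [this]
    exact (Fb (f i) ⟨i, rfl⟩).2
  refine ⟨e, fun i j => ?_⟩
  rw [he i, he j]
  exact ⟨fun hh => by rw [hh], fun hh => hTinj hh⟩

/-- partition of n from a setoid on Fin n -/
def partOf {n : ℕ} (s : Setoid (Fin n)) : Nat.Partition n where
  parts := fiberCards (Quotient.mk s)
  parts_pos := by
    intro i hi
    unfold fiberCards at hi
    obtain ⟨q, _, rfl⟩ := Multiset.mem_map.mp hi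
    obtain ⟨a, rfl⟩ := q.exists_rep
    refine Finset.card_pos.mpr ?_
    rw [Finset.filter_congr_decidable]
    exact ⟨a, Finset.mem_filter.mpr ⟨mem_univ a, rfl⟩⟩
  parts_sum := by
    unfold fiberCards
    have h := Finset.card_eq_sum_card_fiberwise
      (f := Quotient.mk s) (s := Finset.univ) (t := Finset.univ) (fun x _ => mem_univ _)
    simp only [Finset.card_univ, Fintype.card_fin] at h
    change ∑ b : Quotient s, _ = n
    convert h.symm using 2 with b
    exact congrArg Finset.card (Finset.filter_congr_decidable _ _ _)

variable {d : ℕ}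

local notation "E" => EuclideanSpace ℝ (Fin d)

lemma inner_eq_of_norms (u v : E) : ⟪u, v⟫ = (‖u‖^2 + ‖v‖^2 - ‖u - v‖^2)/2 := by
  have h := norm_sub_sq_real u v
  linarith

lemma rigidity (hd : 1 ≤ d) {p q : Fin (d+1) → E}
    (hp : AffineIndependent ℝ p) (hq : AffineIndependent ℝ q)
    (h : ∀ i j, dist (p i) (p j) = dist (q i) (q j)) :
    ∃ f : (EuclideanSpace ℝ (Fin d)) ≃ᵢ (EuclideanSpace ℝ (Fin d)), ∀ i, f (p i) = q i := by
  classical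
  set v : Fin d → E := fun i => p i.succ - p 0 with hv
  set w : Fin d → E := fun i => q i.succ - q 0 with hw
  have hvli : LinearIndependent ℝ v := by
    have h1 := (affineIndependent_iff_linearIndependent_vsub ℝ p 0).mp hp
    have h2 : Injective (fun i : Fin d => (⟨i.succ, Fin.succ_ne_zero i⟩ : {x : Fin (d+1) // x ≠ 0})) := by
      intro a b hab
      simpa [Fin.succ_inj] using Subtype.ext_iff.mp hab
    have := h1.comp _ h2
    convert this using 1 <;> rfl
  have hwli : LinearIndependent ℝ w := by
    have h1 := (affineIndependent_iff_linearIndependent_vsub ℝ q 0).mp hq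
    have h2 : Injective (fun i : Fin d => (⟨i.succ, Fin.succ_ne_zero i⟩ : {x : Fin (d+1) // x ≠ 0})) := by
      intro a b hab
      simpa [Fin.succ_inj] using Subtype.ext_iff.mp hab
    have := h1.comp _ h2
    convert this using 1 <;> rfl
  haveI : Nonempty (Fin d) := ⟨⟨0, hd⟩⟩
  have hcard : Fintype.card (Fin d) = Module.finrank ℝ E := by
    rw [finrank_euclideanSpace_fin, Fintype.card_fin]
  set bv : Module.Basis (Fin d) ℝ E := basisOfLinearIndependentOfCardEqFinrank hvli hcard with hbv
  set bw : Module.Basis (Fin d) ℝ E := basisOfLinearIndependentOfCardEqFinrank hwli hcard with hbw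
  have hbvc : ⇑bv = v := coe_basisOfLinearIndependentOfCardEqFinrank hvli hcard
  have hbwc : ⇑bw = w := coe_basisOfLinearIndependentOfCardEqFinrank hwli hcard
  set T : E ≃ₗ[ℝ] E := bv.equiv bw (Equiv.refl _) with hT
  have hTv : ∀ i, T (v i) = w i := by
    intro i
    rw [← hbvc, ← hbwc]
    exact bv.equiv_apply i bw (Equiv.refl _)
  -- distance data
  have hnorm : ∀ i, ‖v i‖ = ‖w i‖ := by
    intro i
    simp only [hv, hw, ← dist_eq_norm]
    exact h _ _
  have hnorm2 : ∀ i j, ‖v i - v j‖ = ‖w i - w j‖ := by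
    intro i j
    have : v i - v j = p i.succ - p j.succ := by simp [hv]
    have h2 : w i - w j = q i.succ - q j.succ := by simp [hw]
    rw [this, h2, ← dist_eq_norm, ← dist_eq_norm]
    exact h _ _
  have hinner : ∀ i j, ⟪v i, v j⟫ = ⟪w i, w j⟫ := by
    intro i j
    rw [inner_eq_of_norms, inner_eq_of_norms, hnorm, hnorm, hnorm2]
  have hbasis : ∀ i j, ⟪T (bv i), T (bv j)⟫ = ⟪bv i, bv j⟫ := by
    intro i j
    rw [hbvc]
    simp only [hTv]
    exact (hinner i j).symm
  have key : ∀ x y : E, ⟪T x, T y⟫ = ⟪x, y⟫ := by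
    intro x y
    rw [← bv.sum_repr x, ← bv.sum_repr y]
    simp only [map_sum, map_smul, inner_sum, sum_inner, real_inner_smul_left, real_inner_smul_right]
    refine Finset.sum_congr rfl fun i _ => Finset.sum_congr rfl fun j _ => ?_
    rw [hbasis]
  set Tiso : E ≃ₗᵢ[ℝ] E := T.isometryOfInner key with hTiso
  refine ⟨((IsometryEquiv.vaddConst (p 0)).symm.trans Tiso.toIsometryEquiv).trans
    (IsometryEquiv.vaddConst (q 0)), ?_⟩
  intro i
  have happly : ∀ x : E, (((IsometryEquiv.vaddConst (p 0)).symm.trans Tiso.toIsometryEquiv).trans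
      (IsometryEquiv.vaddConst (q 0))) x = T (x - p 0) + q 0 := by
    intro x
    simp [IsometryEquiv.trans_apply, hTiso]
  rw [happly]
  induction i using Fin.cases with
  | zero => simp
  | succ k =>
    have : p k.succ - p 0 = v k := rfl
    rw [this, hTv k]
    simp [hw]

variable {d : ℕ} {lam : ℝ}

def cRel (p : Fin (d+1) → EuclideanSpace ℝ (Fin d)) (i j : Fin (d+1)) : Prop :=
  i = j ∨ dist (p i) (p j) = 1

lemma cRel_equiv (hlam : 2 ≤ lam) (p : Fin (d+1) → EuclideanSpace ℝ (Fin d))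
    (hp : AffineIndependent ℝ p)
    (hd2 : ∀ i j, i ≠ j → dist (p i) (p j) ∈ ({1, lam} : Set ℝ)) :
    Equivalence (cRel p) := by
  constructor
  · intro i; exact Or.inl rfl
  · intro i j hij
    rcases hij with rfl | hdist
    · exact Or.inl rfl
    · exact Or.inr (by rwa [dist_comm])
  · intro i j k hij hjk
    rcases hij with rfl | hij
    · exact hjk
    rcases hjk with rfl | hjk
    · exact Or.inr hij
    by_cases hik : i = k
    · exact Or.inl hik
    right
    rcases hd2 i k hik with h1 | h1
    · exact h1
    exfalso
    -- dist (p i) (p k) = lam, but triangle gives ≤ 2 ≤ lam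
    have htri : dist (p i) (p k) ≤ dist (p i) (p j) + dist (p j) (p k) := dist_triangle _ _ _
    rw [h1, hij, hjk] at htri
    have hlam2 : lam = 2 := le_antisymm (by linarith) hlam
    have heq : dist (p i) (p j) + dist (p j) (p k) = dist (p i) (p k) := by
      rw [h1, hij, hjk, hlam2]; norm_num
    have hw : Wbtw ℝ (p i) (p j) (p k) := dist_add_dist_eq_iff.mp heq
    have hcol : Collinear ℝ ({p i, p j, p k} : Set _) := hw.collinear
    -- contradiction with affine independence
    have hij' : i ≠ j := fun hh => by rw [hh, dist_self] at hij; norm_num at hij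
    have hjk' : j ≠ k := fun hh => by rw [hh, dist_self] at hjk; norm_num at hjk
    have hemb : Function.Injective ![i, j, k] := by
      intro a b hab
      fin_cases a <;> fin_cases b <;> simp_all [hij', hjk', hik]
    have haff := hp.comp_embedding ⟨![i, j, k], hemb⟩
    have h3 : p ∘ ![i, j, k] = ![p i, p j, p k] := by
      ext x
      fin_cases x <;> rfl
    have haff2 : AffineIndependent ℝ ![p i, p j, p k] := by
      rw [← h3]; exact haff
    rw [affineIndependent_iff_not_collinear_set] at haff2
    exact haff2 hcol

variable {d : ℕ} {lam : ℝ}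

lemma sq_diff_sum {ι : Type*} [Fintype ι] [DecidableEq ι] {i j : ι} (hij : i ≠ j) (s : ℝ) :
    ∑ a, ((if a = i then s else 0) - (if a = j then s else 0))^2 = 2*s^2 := by
  have hterm : ∀ a, ((if a = i then s else 0) - (if a = j then s else 0))^2
      = (if a = i then s^2 else 0) + (if a = j then s^2 else 0) := by
    intro a
    by_cases h1 : a = i <;> by_cases h2 : a = j
    · exact absurd (h1.symm.trans h2) hij
    · simp [h1, h2, hij, Ne.symm hij]
    · simp [h1, h2, hij, Ne.symm hij]
    · simp [h1, h2]
  rw [Finset.sum_congr rfl (fun a _ => hterm a), Finset.sum_add_distrib,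
    Finset.sum_ite_eq' Finset.univ i (fun _ => s^2), Finset.sum_ite_eq' Finset.univ j (fun _ => s^2)]
  simp; ring

/-- Construction of points in a big euclidean space with the two prescribed distances along a
labelling function `c`. -/
lemma exists_bigConfig (hlam : 2 ≤ lam) {m : ℕ} (c : Fin (d+1) → Fin m) :
    ∃ P : Fin (d+1) → EuclideanSpace ℝ (Fin (d+1) ⊕ Fin m),
      AffineIndependent ℝ P ∧
      ∀ i j, i ≠ j → dist (P i) (P j) = if c i = c j then 1 else lam := by
  classical
  set s : ℝ := Real.sqrt (1/2) with hs
  set t : ℝ := Real.sqrt ((lam^2 - 1)/2) with ht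
  have hs2 : s^2 = 1/2 := Real.sq_sqrt (by norm_num)
  have ht2 : t^2 = (lam^2 - 1)/2 := Real.sq_sqrt (by nlinarith)
  set P : Fin (d+1) → EuclideanSpace ℝ (Fin (d+1) ⊕ Fin m) := fun i =>
    EuclideanSpace.single (Sum.inl i) s + EuclideanSpace.single (Sum.inr (c i)) t with hP
  have happ : ∀ i a, P i a = (if a = (Sum.inl i : Fin (d+1) ⊕ Fin m) then s else 0)
      + (if a = Sum.inr (c i) then t else 0) := by
    intro i a
    simp [hP, EuclideanSpace.single_apply, PiLp.add_apply]
  refine ⟨P, ?_, ?_⟩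
  · rw [affineIndependent_iff]
    intro ss w hw0 hsum i0 hi0
    have h0 := congrArg (EuclideanSpace.proj (𝕜 := ℝ) (Sum.inl i0 : Fin (d+1) ⊕ Fin m)) hsum
    rw [map_sum, map_zero] at h0
    simp only [map_smul] at h0
    have hterm : ∀ i, (EuclideanSpace.proj (𝕜 := ℝ) (Sum.inl i0 : Fin (d+1) ⊕ Fin m)) (P i)
        = if i = i0 then s else 0 := by
      intro i
      have : (EuclideanSpace.proj (𝕜 := ℝ) (Sum.inl i0 : Fin (d+1) ⊕ Fin m)) (P i) = P i (Sum.inl i0) := rfl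
      rw [this, happ]
      simp [Sum.inl.injEq, eq_comm]
    simp only [hterm, smul_eq_mul, mul_ite, mul_zero] at h0
    rw [Finset.sum_ite_eq' ss i0 (fun i => w i * s)] at h0
    simp only [hi0, if_true] at h0
    have hsne : s ≠ 0 := by
      rw [hs]
      positivity
    rcases mul_eq_zero.mp h0 with h | h
    · exact h
    · exact absurd h hsne
  · intro i j hij
    have hdd : dist (P i) (P j) = Real.sqrt (∑ a, (P i a - P j a)^2) := by
      rw [EuclideanSpace.dist_eq]
      congr 1
      refine Finset.sum_congr rfl fun a _ => ?_
      rw [Real.dist_eq, sq_abs]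
    have hsplit : ∑ a, (P i a - P j a)^2
        = (∑ a : Fin (d+1), (P i (Sum.inl a) - P j (Sum.inl a))^2)
          + (∑ b : Fin m, (P i (Sum.inr b) - P j (Sum.inr b))^2) := by
      rw [Fintype.sum_sum_type]
    have hinl : ∑ a : Fin (d+1), (P i (Sum.inl a) - P j (Sum.inl a))^2 = 2 * s^2 := by
      have : ∀ a : Fin (d+1), P i (Sum.inl a) - P j (Sum.inl a)
          = (if a = i then s else 0) - (if a = j then s else 0) := by
        intro a
        rw [happ, happ]
        simp [Sum.inl.injEq]
      rw [Finset.sum_congr rfl (fun a _ => by rw [this a])]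
      exact sq_diff_sum hij s
    by_cases hc : c i = c j
    · have hinr : ∑ b : Fin m, (P i (Sum.inr b) - P j (Sum.inr b))^2 = 0 := by
        refine Finset.sum_eq_zero fun b _ => ?_
        rw [happ, happ, hc]
        simp
      rw [hdd, hsplit, hinl, hinr, hs2, if_pos hc]
      norm_num
    · have hinr : ∑ b : Fin m, (P i (Sum.inr b) - P j (Sum.inr b))^2 = 2 * t^2 := by
        have : ∀ b : Fin m, P i (Sum.inr b) - P j (Sum.inr b)
            = (if b = c i then t else 0) - (if b = c j then t else 0) := by
          intro b
          rw [happ, happ]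
          simp [Sum.inr.injEq]
        rw [Finset.sum_congr rfl (fun b _ => by rw [this b])]
        exact sq_diff_sum hc t
      rw [hdd, hsplit, hinl, hinr, hs2, ht2, if_neg hc]
      have : 2 * (1/2 : ℝ) + 2 * ((lam^2-1)/2) = lam^2 := by ring
      rw [this]
      exact Real.sqrt_sq (by linarith)

variable {d : ℕ}

lemma exists_embed {E' : Type*} [NormedAddCommGroup E'] [InnerProductSpace ℝ E']
    [FiniteDimensional ℝ E'] {P : Fin (d+1) → E'} (hP : AffineIndependent ℝ P) :
    ∃ p : Fin (d+1) → EuclideanSpace ℝ (Fin d),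
      AffineIndependent ℝ p ∧ ∀ i j, dist (p i) (p j) = dist (P i) (P j) := by
  classical
  set V : Submodule ℝ E' := vectorSpan ℝ (Set.range P) with hV
  have hdim : Module.finrank ℝ V = d := hP.finrank_vectorSpan (by simp)
  set ob : OrthonormalBasis (Fin d) ℝ V := (stdOrthonormalBasis ℝ V).reindex (finCongr hdim)
    with hob
  have hmem : ∀ i, P i - P 0 ∈ V := by
    intro i
    have := vsub_mem_vectorSpan (k := ℝ) (V := E') (P := E') (s := Set.range P)
      (Set.mem_range_self i) (Set.mem_range_self (0 : Fin (d+1)))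
    rwa [vsub_eq_sub] at this
  set x : Fin (d+1) → V := fun i => ⟨P i - P 0, hmem i⟩ with hx
  set p : Fin (d+1) → EuclideanSpace ℝ (Fin d) := fun i => ob.repr (x i) with hp
  have hdist : ∀ i j, dist (p i) (p j) = dist (P i) (P j) := by
    intro i j
    rw [dist_eq_norm, dist_eq_norm, hp]
    rw [← map_sub, ob.repr.norm_map]
    have : ((x i - x j : V) : E') = P i - P j := by
      simp [hx]
    rw [← Submodule.norm_coe, this]
  refine ⟨p, ?_, hdist⟩
  rw [affineIndependent_iff]
  intro ss w hw0 hsum i0 hi0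
  have h1 : ∑ e ∈ ss, w e • x e = 0 := by
    apply ob.repr.injective
    rw [map_sum, map_zero]
    simpa only [map_smul] using hsum
  have h2 : ∑ e ∈ ss, w e • P e = 0 := by
    have h3 := congrArg (Submodule.subtype V) h1
    rw [map_sum, map_zero] at h3
    simp only [map_smul, Submodule.coe_subtype, hx, smul_sub] at h3
    have h4 : ∑ e ∈ ss, (w e • P e - w e • P 0) = 0 := h3
    rw [Finset.sum_sub_distrib, ← Finset.sum_smul, hw0, zero_smul, sub_zero] at h4
    exact h4
  exact affineIndependent_iff.mp hP ss w hw0 h2 i0 hi0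

def sigmaFstFiber {m : ℕ} (β : Fin m → Type*) (k : Fin m) :
    {σ : Σ a : Fin m, β a // σ.1 = k} ≃ β k where
  toFun s := s.2 ▸ s.1.2
  invFun x := ⟨⟨k, x⟩, rfl⟩
  left_inv := by rintro ⟨⟨a, x⟩, rfl⟩; rfl
  right_inv x := rfl

lemma exists_labeling {n : ℕ} (P : Nat.Partition n) :
    ∃ (m : ℕ) (c : Fin n → Fin m), Surjective c ∧ fiberCards c = P.parts := by
  classical
  set L : List ℕ := P.parts.toList with hL
  set m : ℕ := L.length with hm
  have hsum : ∑ k : Fin m, L.get k = n := by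
    have h1 : (List.ofFn L.get).sum = ∑ i, L.get i := List.sum_ofFn
    rw [← h1, List.ofFn_get, hL, Multiset.sum_toList, P.parts_sum]
  have hcard : Fintype.card (Σ k : Fin m, Fin (L.get k)) = n := by
    rw [Fintype.card_sigma]
    simpa using hsum
  set eqFin : (Σ k : Fin m, Fin (L.get k)) ≃ Fin n := Fintype.equivFinOfCardEq hcard with he
  set c : Fin n → Fin m := fun i => (eqFin.symm i).1 with hc
  have hfiber : ∀ k, (Finset.univ.filter (fun i => c i = k)).card = L.get k := by
    intro k
    have h1 : (Finset.univ.filter (fun i => c i = k)).card = Fintype.card {i // c i = k} :=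
      (Fintype.card_subtype _).symm
    rw [h1]
    have e2 : {i // c i = k} ≃ {σ : Σ a : Fin m, Fin (L.get a) // σ.1 = k} :=
      Equiv.subtypeEquiv (p := fun i => c i = k) (q := fun σ => σ.1 = k)
        eqFin.symm (fun i => Iff.rfl)
    rw [Fintype.card_congr e2, Fintype.card_congr (sigmaFstFiber _ k), Fintype.card_fin]
  have hpos : ∀ k : Fin m, 0 < L.get k := by
    intro k
    apply P.parts_pos
    rw [← Multiset.mem_toList]
    exact L.get_mem _
  refine ⟨m, c, ?_, ?_⟩
  · intro k
    refine ⟨eqFin ⟨k, ⟨0, hpos k⟩⟩, ?_⟩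
    simp [hc]
  · have h5 : fiberCards c = Multiset.map L.get Finset.univ.val := by
      unfold fiberCards
      apply Multiset.map_congr rfl
      intro k _
      convert hfiber k using 2
      congr 1
    rw [h5, Fin.univ_val_map]
    have h6 : List.ofFn L.get = L := List.ofFn_get L
    rw [h6, hL, Multiset.coe_toList]


section Final
variable {d : ℕ} {lam : ℝ}

def configSetoid (hlam : 2 ≤ lam) (p : Config d lam) : Setoid (Fin (d+1)) :=
  ⟨cRel p.1, cRel_equiv hlam p.1 p.2.1 p.2.2⟩

def toPart (hlam : 2 ≤ lam) (p : Config d lam) : Nat.Partition (d+1) :=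
  partOf (configSetoid hlam p)

lemma mk_eq_iff_cRel (hlam : 2 ≤ lam) (p : Config d lam) (i j : Fin (d+1)) :
    Quotient.mk (configSetoid hlam p) i = Quotient.mk (configSetoid hlam p) j ↔ cRel p.1 i j :=
  ⟨Quotient.exact, fun h => Quotient.sound h⟩

lemma toPart_invariant (hlam : 2 ≤ lam) (p q : Config d lam) (hpq : ConfigIso d lam p q) :
    toPart hlam p = toPart hlam q := by
  obtain ⟨f, σ, hfσ⟩ := hpq
  apply Nat.Partition.ext
  show fiberCards (Quotient.mk (configSetoid hlam p)) = fiberCards (Quotient.mk (configSetoid hlam q))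
  apply fiberCards_eq_of_equiv _ _ σ
  · intro x; exact ⟨x.out, Quotient.out_eq x⟩
  · intro x; exact ⟨x.out, Quotient.out_eq x⟩
  · intro i j
    rw [mk_eq_iff_cRel, mk_eq_iff_cRel]
    unfold cRel
    constructor
    · rintro (rfl | hdist)
      · exact Or.inl rfl
      · refine Or.inr ?_
        rw [← hfσ i, ← hfσ j, f.dist_eq]
        exact hdist
    · rintro (hs | hdist)
      · exact Or.inl (σ.injective hs)
      · refine Or.inr ?_
        rw [← hfσ i, ← hfσ j, f.dist_eq] at hdist
        exact hdist

lemma toPart_inj (hlam : 2 ≤ lam) (hd : 1 ≤ d) (p q : Config d lam)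
    (h : toPart hlam p = toPart hlam q) : ConfigIso d lam p q := by
  have hparts : fiberCards (Quotient.mk (configSetoid hlam p))
      = fiberCards (Quotient.mk (configSetoid hlam q)) := congrArg Nat.Partition.parts h
  obtain ⟨e, he⟩ := exists_equiv_of_fiberCards_eq _ _ hparts
  have hrel : ∀ i j, cRel p.1 i j ↔ cRel q.1 (e i) (e j) := by
    intro i j
    rw [← mk_eq_iff_cRel hlam p, ← mk_eq_iff_cRel hlam q]
    exact he i j
  have hdist : ∀ i j, dist (p.1 i) (p.1 j) = dist ((q.1 ∘ e) i) ((q.1 ∘ e) j) := by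
    intro i j
    by_cases hij : i = j
    · subst hij; simp
    · have hij' : e i ≠ e j := fun hh => hij (e.injective hh)
      have hm1 := p.2.2 i j hij
      simp only [Set.mem_insert_iff, Set.mem_singleton_iff] at hm1
      rcases hm1 with h1 | h1
      · -- dist p = 1, so cRel p, so cRel q, so dist q = 1
        have h2 : cRel q.1 (e i) (e j) := (hrel i j).mp (Or.inr h1)
        rcases h2 with h3 | h3
        · exact absurd h3 hij'
        · rw [h1, Function.comp_apply, Function.comp_apply, h3]
      · -- dist p = lam ; show dist q = lam as well
        have hm2 := q.2.2 (e i) (e j) hij'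
        simp only [Set.mem_insert_iff, Set.mem_singleton_iff] at hm2
        rcases hm2 with h2 | h2
        · -- dist q = 1 would force cRel q hence cRel p hence dist p = 1
          have h3 : cRel p.1 i j := (hrel i j).mpr (Or.inr h2)
          rcases h3 with h4 | h4
          · exact absurd h4 hij
          · -- dist p = 1 and dist p = lam : lam = 1, contradiction with lam ≥ 2
            rw [h4] at h1
            linarith
        · rw [h1, Function.comp_apply, Function.comp_apply, h2]
  have hqe : AffineIndependent ℝ (q.1 ∘ e) := q.2.1.comp_embedding e.toEmbedding
  obtain ⟨f, hf⟩ := rigidity hd p.2.1 hqe hdist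
  exact ⟨f, e, hf⟩

lemma toPart_surj (hlam : 2 ≤ lam) (P : Nat.Partition (d+1)) :
    ∃ p : Config d lam, toPart hlam p = P := by
  obtain ⟨m, c, hcsurj, hfib⟩ := exists_labeling P
  obtain ⟨Pb, haffb, hdistb⟩ := exists_bigConfig (d := d) hlam c
  obtain ⟨p, haffp, hdistp⟩ := exists_embed haffb
  have hmem : ∀ i j, i ≠ j → dist (p i) (p j) ∈ ({1, lam} : Set ℝ) := by
    intro i j hij
    rw [hdistp, hdistb i j hij]
    by_cases hc : c i = c j
    · rw [if_pos hc]; exact Or.inl rfl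
    · rw [if_neg hc]; exact Or.inr rfl
  set cfg : Config d lam := ⟨p, haffp, hmem⟩ with hcfg
  refine ⟨cfg, ?_⟩
  apply Nat.Partition.ext
  show fiberCards (Quotient.mk (configSetoid hlam cfg)) = P.parts
  rw [← hfib]
  apply fiberCards_eq_of_equiv _ _ (Equiv.refl _)
  · intro x; exact ⟨x.out, Quotient.out_eq x⟩
  · exact hcsurj
  · intro i j
    rw [mk_eq_iff_cRel, Equiv.refl_apply, Equiv.refl_apply]
    unfold cRel
    constructor
    · rintro (rfl | hdist)
      · rfl
      · by_contra hc
        by_cases hij : i = j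
        · exact hc (by rw [hij])
        · have := hdistb i j hij
          rw [if_neg hc] at this
          have h2 : dist (cfg.1 i) (cfg.1 j) = lam := by rw [hdistp]; exact this
          rw [h2] at hdist
          linarith
    · intro hc
      by_cases hij : i = j
      · exact Or.inl hij
      · refine Or.inr ?_
        have := hdistb i j hij
        rw [if_pos hc] at this
        rw [hdistp]
        exact this

end Final


end SimplexAux

theorem stmt_9 (lam : ℝ) (hlam : 2 ≤ lam) (d : ℕ) (hd : 1 ≤ d) :
    Nonempty (Quot (ConfigIso d lam) ≃ Nat.Partition (d + 1)) := by
  set F : Quot (ConfigIso d lam) → Nat.Partition (d+1) :=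
    Quot.lift (toPart hlam) (fun p q hpq => toPart_invariant hlam p q hpq) with hF
  have hinj : Function.Injective F := by
    intro a b
    induction a using Quot.ind with
    | _ p =>
      induction b using Quot.ind with
      | _ q =>
        intro hab
        exact Quot.sound (toPart_inj hlam hd p q hab)
  have hsurj : Function.Surjective F := by
    intro P
    obtain ⟨cfg, hcfg⟩ := toPart_surj hlam P
    exact ⟨Quot.mk _ cfg, hcfg⟩
  exact ⟨Equiv.ofBijective F ⟨hinj, hsurj⟩⟩
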